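/- For normal distributions F = N(μ_F, σ_F²), G = N(μ_G, σ_G²) with σ_F ≠ σ_G, the AVM satisfies AVM(F,G) = μ̃(2Φ(μ̃/σ̃) − 1) + 2σ̃φ(μ̃/σ̃), where μ̃ = |μ_F − μ_G| and σ̃ = |σ_F − σ_G|; and if σ_F = σ_G, then AVM(F,G) = μ̃. -/

import Mathlib

open MeasureTheory intervalIntegral

/-- Standard normal density. -/
noncomputable def stdPdf (x : ℝ) : ℝ :=
  (Real.sqrt (2 * Real.pi))⁻¹ * Real.exp (-(x ^ 2) / 2)

/-- Standard normal distribution function. -/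
noncomputable def stdCdf (x : ℝ) : ℝ := ∫ t in Set.Iic x, stdPdf t

/-- Standard normal quantile function. -/
noncomputable def stdQuantile (τ : ℝ) : ℝ := sInf {x | τ ≤ stdCdf x}

open Set Filter Real Topology NNReal ENNReal

lemma stdPdf_eq (x : ℝ) : stdPdf x = (Real.sqrt (2 * Real.pi))⁻¹ * Real.exp (-(1/2) * x ^ 2) := by
  rw [stdPdf]; ring_nf

lemma stdPdf_pos (x : ℝ) : 0 < stdPdf x := by
  have h : 0 < Real.sqrt (2 * Real.pi) := Real.sqrt_pos.2 (by positivity)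
  exact mul_pos (inv_pos.2 h) (Real.exp_pos _)

lemma stdPdf_cont : Continuous stdPdf := by
  unfold stdPdf; fun_prop

lemma stdPdf_even (x : ℝ) : stdPdf (-x) = stdPdf x := by simp [stdPdf]

lemma integrable_stdPdf : Integrable stdPdf := by
  have := (integrable_exp_neg_mul_sq (by norm_num : (0:ℝ) < 1/2)).const_mul
    (Real.sqrt (2 * Real.pi))⁻¹
  refine this.congr (Eventually.of_forall fun x => ?_)
  rw [stdPdf_eq]

lemma integrable_mul_stdPdf : Integrable (fun x => x * stdPdf x) := by
  have := (integrable_mul_exp_neg_mul_sq (by norm_num : (0:ℝ) < 1/2)).const_mul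
    (Real.sqrt (2 * Real.pi))⁻¹
  refine this.congr (Eventually.of_forall fun x => ?_)
  simp only [stdPdf_eq]; ring

lemma integral_stdPdf : ∫ x, stdPdf x = 1 := by
  have h : ∫ x : ℝ, Real.exp (-(1/2) * x ^ 2) = Real.sqrt (Real.pi / (1/2)) :=
    integral_gaussian (1/2)
  have h2 : ∫ x, stdPdf x = (Real.sqrt (2 * Real.pi))⁻¹ * ∫ x : ℝ, Real.exp (-(1/2) * x ^ 2) := by
    rw [← MeasureTheory.integral_const_mul]; exact integral_congr_ae (Eventually.of_forall fun x => stdPdf_eq x)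
  rw [h2, h]
  have : Real.pi / (1/2) = 2 * Real.pi := by ring
  rw [this, inv_mul_cancel₀ (ne_of_gt (Real.sqrt_pos.2 (by positivity)))]

lemma hasDerivAt_neg_stdPdf (x : ℝ) : HasDerivAt (fun y => -stdPdf y) (x * stdPdf x) x := by
  have h1 : HasDerivAt (fun y : ℝ => -(y ^ 2) / 2) (-x) x := by
    have := ((hasDerivAt_pow 2 x).neg).div_const 2
    simpa using this.congr_deriv (by ring)
  have h2 : HasDerivAt (fun y : ℝ => Real.exp (-(y ^ 2) / 2)) (Real.exp (-(x^2)/2) * (-x)) x :=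
    (Real.hasDerivAt_exp _).comp x h1
  have h3 := (h2.const_mul (Real.sqrt (2 * Real.pi))⁻¹).neg
  refine h3.congr_deriv ?_
  simp [stdPdf]; ring

lemma tendsto_stdPdf_atTop : Tendsto stdPdf atTop (𝓝 0) := by
  have h1 : Tendsto (fun x : ℝ => -(x ^ 2) / 2) atTop atBot := by
    apply Tendsto.atBot_div_const (by norm_num)
    exact tendsto_neg_atTop_atBot.comp (tendsto_pow_atTop two_ne_zero)
  have := (Real.tendsto_exp_atBot.comp h1).const_mul (Real.sqrt (2 * Real.pi))⁻¹
  have h2 : Tendsto (fun x : ℝ => (Real.sqrt (2 * Real.pi))⁻¹ * Real.exp (-(x^2)/2)) atTop (𝓝 ((Real.sqrt (2 * Real.pi))⁻¹ * 0)) := this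
  rw [mul_zero] at h2
  exact h2.congr fun x => rfl

lemma tendsto_stdPdf_atBot : Tendsto stdPdf atBot (𝓝 0) := by
  have h : stdPdf = fun x => stdPdf (-x) := by funext x; rw [stdPdf_even]
  rw [h]
  exact tendsto_stdPdf_atTop.comp tendsto_neg_atBot_atTop

lemma tendsto_neg_stdPdf_atBot : Tendsto (fun y => -stdPdf y) atBot (𝓝 0) := by
  simpa using tendsto_stdPdf_atBot.neg

lemma tendsto_neg_stdPdf_atTop : Tendsto (fun y => -stdPdf y) atTop (𝓝 0) := by
  simpa using tendsto_stdPdf_atTop.neg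

lemma integral_Iic_mul_stdPdf (t : ℝ) : ∫ x in Iic t, x * stdPdf x = -stdPdf t := by
  have h := integral_Iic_of_hasDerivAt_of_tendsto' (a := t) (m := 0)
    (fun x _ => hasDerivAt_neg_stdPdf x)
    integrable_mul_stdPdf.integrableOn tendsto_neg_stdPdf_atBot
  simpa using h

lemma integral_Ioi_mul_stdPdf (t : ℝ) : ∫ x in Ioi t, x * stdPdf x = stdPdf t := by
  have h := integral_Ioi_of_hasDerivAt_of_tendsto' (a := t) (m := 0)
    (fun x _ => hasDerivAt_neg_stdPdf x)
    integrable_mul_stdPdf.integrableOn tendsto_neg_stdPdf_atTop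
  simpa using h

lemma integral_Ioi_stdPdf (t : ℝ) : ∫ x in Ioi t, stdPdf x = 1 - stdCdf t := by
  have h := integral_Iic_add_Ioi (f := stdPdf) (b := t) (μ := volume)
    integrable_stdPdf.integrableOn integrable_stdPdf.integrableOn
  rw [integral_stdPdf] at h
  rw [stdCdf]; linarith

lemma stdCdf_sub_stdCdf {a b : ℝ} : stdCdf b - stdCdf a = ∫ x in a..b, stdPdf x := by
  rw [stdCdf, stdCdf, integral_Iic_sub_Iic integrable_stdPdf.integrableOn
    integrable_stdPdf.integrableOn]

lemma stdCdf_strictMono : StrictMono stdCdf := by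
  intro a b hab
  have h : 0 < ∫ x in a..b, stdPdf x :=
    intervalIntegral.intervalIntegral_pos_of_pos
      integrable_stdPdf.intervalIntegrable stdPdf_pos hab
  have h2 := stdCdf_sub_stdCdf (a := a) (b := b)
  linarith

lemma hasDerivAt_stdCdf (x : ℝ) : HasDerivAt stdCdf (stdPdf x) x := by
  have key : stdCdf = fun y => stdCdf 0 + ∫ t in (0:ℝ)..y, stdPdf t := by
    funext y; have := stdCdf_sub_stdCdf (a := (0:ℝ)) (b := y); linarith
  rw [key]
  exact (intervalIntegral.integral_hasDerivAt_right
    integrable_stdPdf.intervalIntegrable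
    (stdPdf_cont.stronglyMeasurable.stronglyMeasurableAtFilter)
    stdPdf_cont.continuousAt).const_add _

lemma stdCdf_continuous : Continuous stdCdf := by
  apply continuous_iff_continuousAt.2 fun x => (hasDerivAt_stdCdf x).continuousAt

lemma stdCdf_neg (x : ℝ) : stdCdf (-x) = 1 - stdCdf x := by
  have h1 : stdCdf (-x) = ∫ t in Iic (-x), stdPdf (-t) := by
    rw [stdCdf]; exact integral_congr_ae (Eventually.of_forall fun t => (stdPdf_even t).symm)
  rw [h1, integral_comp_neg_Iic, neg_neg, integral_Ioi_stdPdf]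

/-- The standard Gaussian measure. -/
noncomputable def gm : Measure ℝ := volume.withDensity (fun x => ENNReal.ofReal (stdPdf x))

lemma gm_apply {s : Set ℝ} (hs : MeasurableSet s) :
    gm s = ENNReal.ofReal (∫ x in s, stdPdf x) := by
  rw [gm, withDensity_apply _ hs,
    ← ofReal_integral_eq_lintegral_ofReal integrable_stdPdf.integrableOn
      (Eventually.of_forall fun x => (stdPdf_pos x).le)]

lemma gm_Iic (x : ℝ) : gm (Iic x) = ENNReal.ofReal (stdCdf x) := by
  rw [gm_apply measurableSet_Iic, stdCdf]

lemma gm_univ : gm univ = 1 := by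
  rw [gm_apply MeasurableSet.univ, setIntegral_univ, integral_stdPdf, ENNReal.ofReal_one]

instance : IsProbabilityMeasure gm := ⟨gm_univ⟩

lemma stdCdf_nonneg (x : ℝ) : 0 ≤ stdCdf x :=
  setIntegral_nonneg measurableSet_Iic fun t _ => (stdPdf_pos t).le

lemma tendsto_stdCdf_atTop : Tendsto stdCdf atTop (𝓝 1) := by
  have h := tendsto_measure_Iic_atTop (μ := gm)
  rw [gm_univ] at h
  have h2 : Tendsto (fun x => (gm (Iic x)).toReal) atTop (𝓝 (1 : ENNReal).toReal) :=
    (ENNReal.continuousAt_toReal (by norm_num)).tendsto.comp h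
  simp only [ENNReal.toReal_one] at h2
  refine h2.congr fun x => ?_
  rw [gm_Iic, ENNReal.toReal_ofReal (stdCdf_nonneg x)]


lemma tendsto_stdCdf_atBot : Tendsto stdCdf atBot (𝓝 0) := by
  have h : stdCdf = fun x => 1 - stdCdf (-x) := by
    funext x; have := stdCdf_neg (-x); rw [neg_neg] at this; linarith
  rw [h]
  have := (tendsto_stdCdf_atTop.comp tendsto_neg_atBot_atTop).const_sub 1
  simpa using this

lemma stdCdf_lt_one (x : ℝ) : stdCdf x < 1 := by
  have h1 : stdCdf x < stdCdf (x + 1) := stdCdf_strictMono (by linarith)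
  have h2 : stdCdf (x + 1) ≤ 1 :=
    stdCdf_strictMono.monotone.ge_of_tendsto tendsto_stdCdf_atTop _
  linarith

lemma stdCdf_pos' (x : ℝ) : 0 < stdCdf x := by
  have := stdCdf_lt_one (-x)
  rw [stdCdf_neg] at this; linarith

lemma stdCdf_mem_Ioo (x : ℝ) : stdCdf x ∈ Ioo (0:ℝ) 1 := ⟨stdCdf_pos' x, stdCdf_lt_one x⟩

lemma stdCdf_surjOn {τ : ℝ} (hτ : τ ∈ Ioo (0:ℝ) 1) : ∃ x, stdCdf x = τ := by
  obtain ⟨a, ha⟩ := (tendsto_stdCdf_atBot.eventually_lt_const hτ.1).exists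
  obtain ⟨b, hb⟩ := (tendsto_stdCdf_atTop.eventually_const_lt hτ.2).exists
  have hab : a ≤ b := le_of_lt (stdCdf_strictMono.lt_iff_lt.1 (by linarith))
  have := intermediate_value_Icc hab stdCdf_continuous.continuousOn
  obtain ⟨x, _, hx⟩ := this ⟨ha.le, hb.le⟩
  exact ⟨x, hx⟩

lemma stdQuantile_stdCdf (x : ℝ) : stdQuantile (stdCdf x) = x := by
  have h : {y | stdCdf x ≤ stdCdf y} = Ici x := by
    ext y; simp [stdCdf_strictMono.le_iff_le]
  rw [stdQuantile, h, csInf_Ici]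

lemma stdQuantile_le_iff {τ x : ℝ} (hτ : τ ∈ Ioo (0:ℝ) 1) :
    stdQuantile τ ≤ x ↔ τ ≤ stdCdf x := by
  obtain ⟨x₀, hx₀⟩ := stdCdf_surjOn hτ
  rw [← hx₀, stdQuantile_stdCdf, stdCdf_strictMono.le_iff_le]

noncomputable def qe (τ : ℝ) : ℝ := if τ ∈ Ioo (0:ℝ) 1 then stdQuantile τ else 0

lemma qe_preimage_Iic (x : ℝ) :
    qe ⁻¹' (Iic x) = Ioc 0 (stdCdf x) ∪ (if 0 ≤ x then (Ioo (0:ℝ) 1)ᶜ else ∅) := by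
  ext τ
  by_cases hτ : τ ∈ Ioo (0:ℝ) 1
  · have h1 : qe τ = stdQuantile τ := if_pos hτ
    have h2 : τ ∈ Ioc (0:ℝ) (stdCdf x) ↔ τ ≤ stdCdf x := by
      constructor
      · exact fun h => h.2
      · exact fun h => ⟨hτ.1, h⟩
    simp only [mem_preimage, mem_Iic, h1, mem_union, h2, stdQuantile_le_iff hτ]
    constructor
    · exact fun h => Or.inl h
    · rintro (h | h)
      · exact h
      · split_ifs at h with h0
        · exact absurd hτ h
        · exact absurd h (notMem_empty τ)
  · have h1 : qe τ = 0 := if_neg hτ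
    have h2 : τ ∉ Ioc (0:ℝ) (stdCdf x) := by
      intro h
      exact hτ ⟨h.1, lt_of_le_of_lt h.2 (stdCdf_mem_Ioo x).2⟩
    simp only [mem_preimage, mem_Iic, h1, mem_union, h2, false_or]
    split_ifs with h0
    · simp [hτ, h0]
    · simpa using (not_le.1 h0).not_ge

lemma qe_measurable : Measurable qe := by
  apply measurable_of_Iic
  intro x
  rw [qe_preimage_Iic]
  split_ifs
  · exact measurableSet_Ioc.union measurableSet_Ioo.compl
  · exact measurableSet_Ioc.union MeasurableSet.empty

lemma stdQuantile_aemeasurable :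
    AEMeasurable stdQuantile (volume.restrict (Ioo (0:ℝ) 1)) := by
  refine ⟨qe, qe_measurable, ?_⟩
  rw [EventuallyEq, ae_restrict_iff' measurableSet_Ioo]
  exact Eventually.of_forall fun τ hτ => (if_pos hτ).symm

lemma map_stdQuantile :
    Measure.map stdQuantile (volume.restrict (Ioo (0:ℝ) 1)) = gm := by
  have hmap_fin : IsFiniteMeasure (Measure.map stdQuantile (volume.restrict (Ioo (0:ℝ) 1))) := by
    constructor
    rw [Measure.map_apply_of_aemeasurable stdQuantile_aemeasurable MeasurableSet.univ]
    simp [Real.volume_Ioo]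
  have hgm_fin : IsFiniteMeasure gm := ⟨by rw [gm_univ]; norm_num⟩
  refine @Measure.ext_of_Iic ℝ _ _ _ _ _ _ _ _ hmap_fin ?_
  intro x
  rw [Measure.map_apply_of_aemeasurable stdQuantile_aemeasurable measurableSet_Iic,
    Measure.restrict_apply₀' measurableSet_Ioo.nullMeasurableSet, gm_Iic]
  have hset : stdQuantile ⁻¹' Iic x ∩ Ioo 0 1 = Ioc 0 (stdCdf x) := by
    ext τ
    simp only [mem_inter_iff, mem_preimage, mem_Iic, mem_Ioo, mem_Ioc]
    constructor
    · rintro ⟨h1, h2⟩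
      exact ⟨h2.1, (stdQuantile_le_iff h2).1 h1⟩
    · rintro ⟨h1, h2⟩
      have hτ : τ ∈ Ioo (0:ℝ) 1 := ⟨h1, lt_of_le_of_lt h2 (stdCdf_mem_Ioo x).2⟩
      exact ⟨(stdQuantile_le_iff hτ).2 h2, hτ.1, hτ.2⟩
  rw [hset, Real.volume_Ioc]
  simp [stdCdf_nonneg x]

lemma toNNReal_stdPdf_measurable : Measurable (fun x => Real.toNNReal (stdPdf x)) :=
  measurable_real_toNNReal.comp stdPdf_cont.measurable

lemma integral_gm (g : ℝ → ℝ) : ∫ x, g x ∂gm = ∫ x, g x * stdPdf x := by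
  have hgm : gm = volume.withDensity (fun x => ((Real.toNNReal (stdPdf x) : ℝ≥0) : ℝ≥0∞)) := rfl
  rw [hgm, integral_withDensity_eq_integral_smul toNNReal_stdPdf_measurable]
  refine integral_congr_ae (Eventually.of_forall fun x => ?_)
  simp only [NNReal.smul_def, Real.coe_toNNReal _ (stdPdf_pos x).le]
  rw [smul_eq_mul]; ring

lemma integral_quantile (g : ℝ → ℝ) (hg : Continuous g) :
    (∫ τ in (0:ℝ)..1, g (stdQuantile τ)) = ∫ x, g x * stdPdf x := by
  rw [intervalIntegral.integral_of_le (by norm_num : (0:ℝ) ≤ 1),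
    integral_Ioc_eq_integral_Ioo]
  have hmeas : AEStronglyMeasurable g
      (Measure.map stdQuantile (volume.restrict (Ioo (0:ℝ) 1))) := by
    rw [map_stdQuantile]; exact hg.aestronglyMeasurable
  have h := integral_map stdQuantile_aemeasurable hmeas
  rw [map_stdQuantile] at h
  rw [← h, integral_gm]

lemma integrable_abs_lin_mul_stdPdf (a b : ℝ) :
    Integrable (fun x => |a + b * x| * stdPdf x) := by
  refine Integrable.mono' ((integrable_stdPdf.const_mul |a|).add
    ((integrable_mul_stdPdf.abs).const_mul |b|))
    ((continuous_const.add (continuous_const.mul continuous_id)).abs.mul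
      stdPdf_cont).aestronglyMeasurable
    (Eventually.of_forall fun x => ?_)
  have h1 : 0 < stdPdf x := stdPdf_pos x
  have h2 : |a + b * x| ≤ |a| + |b| * |x| := by
    calc |a + b * x| ≤ |a| + |b * x| := abs_add_le _ _
    _ = |a| + |b| * |x| := by rw [abs_mul]
  rw [Real.norm_eq_abs, abs_of_nonneg (by positivity)]
  calc |a + b * x| * stdPdf x ≤ (|a| + |b| * |x|) * stdPdf x := by nlinarith
  _ = |a| * stdPdf x + |b| * |x * stdPdf x| := by
      rw [abs_mul, abs_of_nonneg h1.le]; ring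

lemma integral_abs_lin_pos (m s : ℝ) (hm : 0 ≤ m) (hs : 0 < s) :
    ∫ x, |m + s * x| * stdPdf x
      = m * (2 * stdCdf (m / s) - 1) + 2 * s * stdPdf (m / s) := by
  set c := m / s with hc
  have hInt := integrable_abs_lin_mul_stdPdf m s
  have hsplit := integral_Iic_add_Ioi (f := fun x => |m + s * x| * stdPdf x) (b := -c)
    hInt.integrableOn hInt.integrableOn
  have hIic : ∫ x in Iic (-c), |m + s * x| * stdPdf x
      = -m * stdCdf (-c) + s * stdPdf (-c) := by
    have hcongr : ∀ x ∈ Iic (-c), |m + s * x| * stdPdf x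
        = -m * stdPdf x + -s * (x * stdPdf x) := by
      intro x hx
      have hx' : x ≤ -c := hx
      have : m + s * x ≤ 0 := by
        have : s * x ≤ s * (-c) := by exact mul_le_mul_of_nonneg_left hx' hs.le
        rw [hc] at this
        have h2 : s * (-(m/s)) = -m := by field_simp
        nlinarith
      rw [abs_of_nonpos this]; ring
    rw [setIntegral_congr_fun measurableSet_Iic hcongr]
    rw [integral_add ((integrable_stdPdf.const_mul (-m)).integrableOn)
      ((integrable_mul_stdPdf.const_mul (-s)).integrableOn)]
    rw [MeasureTheory.integral_const_mul, MeasureTheory.integral_const_mul, integral_Iic_mul_stdPdf]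
    have : ∫ x in Iic (-c), stdPdf x = stdCdf (-c) := rfl
    rw [this]; ring
  have hIoi : ∫ x in Ioi (-c), |m + s * x| * stdPdf x
      = m * (1 - stdCdf (-c)) + s * stdPdf (-c) := by
    have hcongr : ∀ x ∈ Ioi (-c), |m + s * x| * stdPdf x
        = m * stdPdf x + s * (x * stdPdf x) := by
      intro x hx
      have hx' : -c < x := hx
      have : 0 ≤ m + s * x := by
        have : s * (-c) ≤ s * x := mul_le_mul_of_nonneg_left hx'.le hs.le
        have h2 : s * (-(m/s)) = -m := by field_simp
        rw [hc] at this
        nlinarith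
      rw [abs_of_nonneg this]; ring
    rw [setIntegral_congr_fun measurableSet_Ioi hcongr]
    rw [integral_add ((integrable_stdPdf.const_mul m).integrableOn)
      ((integrable_mul_stdPdf.const_mul s).integrableOn)]
    rw [MeasureTheory.integral_const_mul, MeasureTheory.integral_const_mul, integral_Ioi_mul_stdPdf, integral_Ioi_stdPdf]
  rw [← hsplit, hIic, hIoi, stdCdf_neg, stdPdf_even]
  ring

lemma integral_comp_neg' (f : ℝ → ℝ) : ∫ x, f (-x) = ∫ x, f x := by
  have h := MeasureTheory.integral_map_equiv (μ := (volume : Measure ℝ)) (MeasurableEquiv.neg ℝ) f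
  rw [show Measure.map (MeasurableEquiv.neg ℝ) volume = volume from
    Measure.map_neg_eq_self volume] at h
  exact h.symm

lemma integral_abs_flip (a b : ℝ) :
    ∫ x, |a + b * x| * stdPdf x = ∫ x, |a + -b * x| * stdPdf x := by
  have := integral_comp_neg' (fun x => |a + -b * x| * stdPdf x)
  rw [← this]
  refine integral_congr_ae (Eventually.of_forall fun x => ?_)
  show |a + b * x| * stdPdf x = |a + -b * -x| * stdPdf (-x)
  rw [stdPdf_even, show a + -b * -x = a + b * x by ring]

lemma integral_abs_neg (a b : ℝ) :
    ∫ x, |a + b * x| * stdPdf x = ∫ x, |-a + -b * x| * stdPdf x := by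
  refine integral_congr_ae (Eventually.of_forall fun x => ?_)
  show |a + b * x| * stdPdf x = |-a + -b * x| * stdPdf x
  rw [show -a + -b * x = -(a + b * x) by ring, abs_neg]

lemma integral_abs_lin (a b : ℝ) (hb : b ≠ 0) :
    ∫ x, |a + b * x| * stdPdf x
      = |a| * (2 * stdCdf (|a| / |b|) - 1) + 2 * |b| * stdPdf (|a| / |b|) := by
  have key : ∫ x, |a + b * x| * stdPdf x = ∫ x, |(|a| + |b| * x)| * stdPdf x := by
    rcases le_or_gt 0 a with ha | ha <;> rcases lt_or_gt_of_ne hb with hb' | hb'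
    · rw [abs_of_nonneg ha, abs_of_neg hb', integral_abs_flip]
    · rw [abs_of_nonneg ha, abs_of_pos hb']
    · rw [abs_of_neg ha, abs_of_neg hb', integral_abs_neg]
    · rw [abs_of_neg ha, abs_of_pos hb', integral_abs_neg, integral_abs_flip, neg_neg]
  rw [key, integral_abs_lin_pos |a| |b| (abs_nonneg a) (abs_pos.2 hb)]

/-- Closed form of the AVM between two normal distributions, with quantile
functions `F⁻¹(τ) = μ_F + σ_F Φ⁻¹(τ)` and `G⁻¹(τ) = μ_G + σ_G Φ⁻¹(τ)`. -/
theorem avm_normal (μF μG σF σG : ℝ) (hσF : 0 < σF) (hσG : 0 < σG) :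
    (σF ≠ σG →
      (∫ τ in (0:ℝ)..1,
        |(μF + σF * stdQuantile τ) - (μG + σG * stdQuantile τ)|) =
        |μF - μG| * (2 * stdCdf (|μF - μG| / |σF - σG|) - 1) +
          2 * |σF - σG| * stdPdf (|μF - μG| / |σF - σG|)) ∧
    (σF = σG →
      (∫ τ in (0:ℝ)..1,
        |(μF + σF * stdQuantile τ) - (μG + σG * stdQuantile τ)|) =
        |μF - μG|) := by
  constructor
  · intro hne
    have hcongr : ∀ τ : ℝ, |(μF + σF * stdQuantile τ) - (μG + σG * stdQuantile τ)|
        = |(μF - μG) + (σF - σG) * stdQuantile τ| := by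
      intro τ; ring_nf
    have h1 : (∫ τ in (0:ℝ)..1,
        |(μF + σF * stdQuantile τ) - (μG + σG * stdQuantile τ)|)
        = ∫ τ in (0:ℝ)..1, |(μF - μG) + (σF - σG) * stdQuantile τ| := by
      refine intervalIntegral.integral_congr fun τ _ => hcongr τ
    rw [h1, integral_quantile (fun x => |(μF - μG) + (σF - σG) * x|)
      ((continuous_const.add (continuous_const.mul continuous_id)).abs),
      integral_abs_lin _ _ (sub_ne_zero.2 hne)]
  · intro heq
    have hcongr : ∀ τ : ℝ, |(μF + σF * stdQuantile τ) - (μG + σG * stdQuantile τ)|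
        = |μF - μG| := by
      intro τ; rw [heq]; ring_nf
    rw [intervalIntegral.integral_congr (fun τ _ => hcongr τ)]
    simp
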